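/- Let R be a discrete valuation ring and M a finitely generated R-module. If M is torsion-free then M is free. In particular, if E and F are complexes on a proper flat R-scheme such that H^{-1} of the derived pushforward of RHom(E,F) vanishes after base change to the residue field, then Ext^0(E,F) = H^0(Rf_* RHom(E,F)) is a finite free R-module. -/

import Mathlib

section aux

open scoped TensorProduct

variable {R : Type u} [CommRing R] (I : Ideal R) {M : Type u} [AddCommGroup M] [Module R M]

lemma aux_mk_one_surjective (v : (R ⧸ I) ⊗[R] M) : ∃ z : M, (1 : R ⧸ I) ⊗ₜ[R] z = v := by
  induction v with
  | zero => exact ⟨0, TensorProduct.tmul_zero _ _⟩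
  | tmul c m =>
      obtain ⟨r, rfl⟩ := Ideal.Quotient.mk_surjective c
      refine ⟨r • m, ?_⟩
      rw [TensorProduct.tmul_smul, TensorProduct.smul_tmul']
      congr 1
      rw [Algebra.smul_def, mul_one, Ideal.Quotient.algebraMap_eq]
  | add x y hx hy =>
      obtain ⟨z1, rfl⟩ := hx
      obtain ⟨z2, rfl⟩ := hy
      exact ⟨z1 + z2, TensorProduct.tmul_add _ _ _⟩

lemma aux_tmul_one_eq_zero {w : M} (hw : (1 : R ⧸ I) ⊗ₜ[R] w = 0) :
    w ∈ I • (⊤ : Submodule R M) := by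
  have := congrArg (TensorProduct.quotTensorEquivQuotSMul M I) hw
  rw [map_zero] at this
  have h1 : (1 : R ⧸ I) = Ideal.Quotient.mk I 1 := rfl
  rw [h1, TensorProduct.quotTensorEquivQuotSMul_mk_tmul, one_smul] at this
  exact (Submodule.Quotient.mk_eq_zero _).mp this

end aux

theorem stmt9 {R : Type u} [CommRing R] [IsDomain R] [IsDiscreteValuationRing R] :
    (∀ (M : Type u) [AddCommGroup M] [Module R M],
      Module.Finite R M → NoZeroSMulDivisors R M → Module.Free R M) ∧
    (∀ (Cm2 Cm1 C0 C1 : Type u)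
      [AddCommGroup Cm2] [Module R Cm2] [Module.Free R Cm2] [Module.Finite R Cm2]
      [AddCommGroup Cm1] [Module R Cm1] [Module.Free R Cm1] [Module.Finite R Cm1]
      [AddCommGroup C0] [Module R C0] [Module.Free R C0] [Module.Finite R C0]
      [AddCommGroup C1] [Module R C1] [Module.Free R C1] [Module.Finite R C1]
      (a : Cm2 →ₗ[R] Cm1) (b : Cm1 →ₗ[R] C0) (c : C0 →ₗ[R] C1),
      b ∘ₗ a = 0 → c ∘ₗ b = 0 →
      (∀ x ∈ LinearMap.ker (LinearMap.baseChange (IsLocalRing.ResidueField R) b),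
        x ∈ LinearMap.range (LinearMap.baseChange (IsLocalRing.ResidueField R) a)) →
      (Module.Free R
          (↥(LinearMap.ker c) ⧸
            (LinearMap.range b).comap (LinearMap.ker c).subtype) ∧
        Module.Finite R
          (↥(LinearMap.ker c) ⧸
            (LinearMap.range b).comap (LinearMap.ker c).subtype))) := by
  have part1 : ∀ (M : Type u) [AddCommGroup M] [Module R M],
      Module.Finite R M → NoZeroSMulDivisors R M → Module.Free R M := by
    intro M _ _ hf ht
    have : Module.IsTorsionFree R M := Module.isTorsionFree_iff_smul_eq_zero.mpr
      (fun r m h => ht.eq_zero_or_eq_zero_of_smul_eq_zero h)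
    exact Module.free_of_finite_type_torsion_free'
  refine ⟨part1, ?_⟩
  intro Cm2 Cm1 C0 C1 _ _ _ _ _ _ _ _ _ _ _ _ _ _ _ _ a b c hba hcb hker
  set k := IsLocalRing.ResidueField R
  obtain ⟨π, hπ⟩ := IsDiscreteValuationRing.exists_irreducible R
  have hmax : IsLocalRing.maximalIdeal R = Ideal.span {π} :=
    (IsDiscreteValuationRing.irreducible_iff_uniformizer π).mp hπ
  -- key step: dividing by π
  have key : ∀ x : C0, π • x ∈ LinearMap.range b → x ∈ LinearMap.range b := by
    intro x ⟨y, hy⟩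
    have hy1 : ((1 : k) ⊗ₜ[R] y) ∈ LinearMap.ker (b.baseChange k) := by
      rw [LinearMap.mem_ker, LinearMap.baseChange_tmul, hy, TensorProduct.tmul_smul]
      have hπ0 : (Ideal.Quotient.mk (IsLocalRing.maximalIdeal R) π) = 0 :=
        Ideal.Quotient.eq_zero_iff_mem.mpr
          (by rw [hmax]; exact Ideal.mem_span_singleton_self π)
      have h10 : π • (1 : k) = 0 := by
        rw [Algebra.smul_def, mul_one, IsLocalRing.ResidueField.algebraMap_eq]
        exact hπ0
      rw [TensorProduct.smul_tmul', h10, TensorProduct.zero_tmul]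
    obtain ⟨v, hv⟩ := hker _ hy1
    have hs : ∀ v : TensorProduct R k Cm2, ∃ z : Cm2, (1 : k) ⊗ₜ[R] z = v := by
      intro v
      induction v with
      | zero => exact ⟨0, TensorProduct.tmul_zero _ _⟩
      | tmul c m =>
          obtain ⟨r, rfl⟩ := IsLocalRing.residue_surjective c
          refine ⟨r • m, ?_⟩
          rw [TensorProduct.tmul_smul, TensorProduct.smul_tmul']
          congr 1
          rw [Algebra.smul_def, mul_one, IsLocalRing.ResidueField.algebraMap_eq]
      | add x y hx hy =>
          obtain ⟨z1, rfl⟩ := hx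
          obtain ⟨z2, rfl⟩ := hy
          exact ⟨z1 + z2, TensorProduct.tmul_add _ _ _⟩
    obtain ⟨z, rfl⟩ := hs v
    rw [LinearMap.baseChange_tmul] at hv
    have hw : (1 : k) ⊗ₜ[R] (y - a z) = 0 := by
      rw [TensorProduct.tmul_sub, hv, sub_self]
    have hmem := aux_tmul_one_eq_zero (IsLocalRing.maximalIdeal R) hw
    rw [hmax] at hmem
    -- y - a z = π • u for some u
    have hdiv : ∃ u : Cm1, y - a z = π • u := by
      refine Submodule.smul_induction_on hmem ?_ ?_
      · intro r hr n _
        obtain ⟨t, ht⟩ := Ideal.mem_span_singleton'.mp hr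
        exact ⟨t • n, by rw [← ht, mul_comm, mul_smul]⟩
      · rintro w1 w2 ⟨u1, rfl⟩ ⟨u2, rfl⟩
        exact ⟨u1 + u2, by rw [smul_add]⟩
    obtain ⟨u, hu⟩ := hdiv
    refine ⟨u, ?_⟩
    have hba' : b (a z) = 0 := by
      have := congrFun (congrArg DFunLike.coe hba) z
      simpa using this
    have : π • b u = π • x := by
      have : b (y - a z) = π • b u := by rw [hu, map_smul]
      rw [map_sub, hba', sub_zero, hy] at this
      exact this.symm
    exact smul_right_injective C0 hπ.ne_zero this
  have keyn : ∀ (n : ℕ) (x : C0), π ^ n • x ∈ LinearMap.range b → x ∈ LinearMap.range b := by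
    intro n
    induction n with
    | zero => intro x hx; simpa using hx
    | succ n ih =>
        intro x hx
        rw [pow_succ, mul_smul] at hx
        exact key x (ih _ hx)
  -- torsion-freeness of the quotient
  set N := (LinearMap.range b).comap (LinearMap.ker c).subtype with hN
  have tf : NoZeroSMulDivisors R (↥(LinearMap.ker c) ⧸ N) := by
    refine ⟨fun {r q} hrq => ?_⟩
    rcases eq_or_ne r 0 with hr | hr
    · exact Or.inl hr
    right
    obtain ⟨x, rfl⟩ := Submodule.Quotient.mk_surjective N q
    rw [← Submodule.Quotient.mk_smul, Submodule.Quotient.mk_eq_zero] at hrq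
    have hrx : r • (x : C0) ∈ LinearMap.range b := hrq
    obtain ⟨n, u, hu⟩ := IsDiscreteValuationRing.associated_pow_irreducible hr hπ
    have hpow : π ^ n • (x : C0) ∈ LinearMap.range b := by
      rw [← hu, mul_comm, mul_smul]
      exact Submodule.smul_mem _ _ hrx
    have := keyn n _ hpow
    rw [Submodule.Quotient.mk_eq_zero]
    exact this
  have : IsNoetherianRing R := inferInstance
  have fin : Module.Finite R (↥(LinearMap.ker c) ⧸ N) := by
    have : Module.Finite R ↥(LinearMap.ker c) :=
      Module.Finite.of_injective (LinearMap.ker c).subtype Subtype.coe_injective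
    infer_instance
  exact ⟨part1 _ fin tf, fin⟩
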